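/- Let H be a compact connected Lie group and τ an involutive (smooth) automorphism of H with fixed-point subgroup H_τ. Define H* = {x ∈ H : τ x = x⁻¹} and f : H/H_τ → H* by f(k H_τ) = k (τ k)⁻¹. Then f is a well-defined injective immersion; in particular its image {k (τ k)⁻¹ : k ∈ H} is an open subset of H*, and (H being compact) it is also closed in H*. -/

import Mathlib

open Filter Topology

noncomputable def twoSmulEquiv (F : Type*) [NormedAddCommGroup F] [NormedSpace ℝ F] :
    F ≃L[ℝ] F :=
  { LinearEquiv.smulOfNeZero ℝ F 2 two_ne_zero with
    continuous_toFun := continuous_const_smul (2:ℝ)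
    continuous_invFun := by
      have : Continuous fun x : F => ((2:ℝ)⁻¹) • x := continuous_const_smul _
      convert this using 1
      rfl }

lemma twoSmulEquiv_apply {F : Type*} [NormedAddCommGroup F] [NormedSpace ℝ F] (x : F) :
    twoSmulEquiv F x = (2:ℝ) • x := rfl

lemma core_analysis {E : Type*} [NormedAddCommGroup E] [NormedSpace ℝ E]
    [FiniteDimensional ℝ E]
    {rh sh : E → E} (hrC : ContDiffAt ℝ ((⊤:ℕ∞) : WithTop ℕ∞) rh 0) (hr0 : rh 0 = 0)
    (hrr : ∀ᶠ v in 𝓝 (0:E), rh (rh v) = v)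
    (hcomm : ∀ᶠ v in 𝓝 (0:E), rh (sh v) = sh (rh v))
    (hs0 : sh 0 = 0)
    (hsS : HasStrictFDerivAt sh ((2:ℝ) • ContinuousLinearMap.id ℝ E) 0)
    {U0 : Set E} (hU0 : U0 ∈ 𝓝 (0:E)) :
    ∀ᶠ v in 𝓝 (0:E), rh v = v → ∃ w ∈ U0, rh w = w ∧ sh w = v := by
  haveI : CompleteSpace E := FiniteDimensional.complete ℝ E
  set M : E →L[ℝ] E := fderiv ℝ rh 0 with hMdef
  have hone : (1 : WithTop ℕ∞) ≤ ((⊤:ℕ∞) : WithTop ℕ∞) := by exact_mod_cast le_top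
  have hrM : HasStrictFDerivAt rh M 0 := hrC.hasStrictFDerivAt (by simp)
  -- M ∘ M = id
  have hMM : M.comp M = ContinuousLinearMap.id ℝ E := by
    have h0 : HasFDerivAt rh M (rh 0) := by rw [hr0]; exact hrM.hasFDerivAt
    have h1 : HasFDerivAt (rh ∘ rh) (M.comp M) 0 := h0.comp 0 hrM.hasFDerivAt
    have h2 : HasFDerivAt (id : E → E) (M.comp M) 0 :=
      h1.congr_of_eventuallyEq (hrr.mono fun v hv => hv.symm)
    exact h2.unique (hasFDerivAt_id 0)
  have hMMapp : ∀ z : E, M (M z) = z := fun z => by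
    have := congrArg (fun L : E →L[ℝ] E => L z) hMM
    simpa using this
  -- the linearizing map ρ
  set ρ : E → E := fun v => (2:ℝ)⁻¹ • (v + M (rh v)) with hρdef
  have hρ0 : ρ 0 = 0 := by simp [hρdef, hr0]
  have hρS : HasStrictFDerivAt ρ
      ((ContinuousLinearEquiv.refl ℝ E : E ≃L[ℝ] E) : E →L[ℝ] E) 0 := by
    have hMrh : HasStrictFDerivAt (fun v => M (rh v)) (M.comp M) 0 := by
      have hM : HasStrictFDerivAt (⇑M) M (rh 0) := M.hasStrictFDerivAt
      exact hM.comp 0 hrM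
    have h2 : HasStrictFDerivAt (fun v => v + M (rh v))
        (ContinuousLinearMap.id ℝ E + M.comp M) 0 :=
      (hasStrictFDerivAt_id 0).add hMrh
    have h3 := h2.const_smul ((2:ℝ)⁻¹)
    convert h3 using 1
    · rfl
    rw [hMM]
    ext v
    simp
    module
  -- pointwise conjugation identity
  have econj : ∀ u, rh (rh u) = u → ρ (rh u) = M (ρ u) := fun u hu => by
    show (2:ℝ)⁻¹ • (rh u + M (rh (rh u))) = M ((2:ℝ)⁻¹ • (u + M (rh u)))
    rw [hu, map_smul, map_add, hMMapp]
    module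
  -- local inverse of ρ
  set ρinv : E → E := hρS.localInverse ρ _ 0 with hρinvdef
  have hρleft : ∀ᶠ v in 𝓝 (0:E), ρinv (ρ v) = v := hρS.eventually_left_inverse
  have hρinv0 : ρinv 0 = 0 := by
    have := hρS.localInverse_apply_image; rwa [hρ0] at this
  have hρright : ∀ᶠ y in 𝓝 (0:E), ρ (ρinv y) = y := by
    have := hρS.eventually_right_inverse; rwa [hρ0] at this
  have hρinvS : HasStrictFDerivAt ρinv
      ((ContinuousLinearEquiv.refl ℝ E).symm : E →L[ℝ] E) 0 := by
    have := hρS.to_localInverse; rwa [hρ0] at this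
  have hρinvcont : ContinuousAt ρinv 0 := by
    have := hρS.localInverse_continuousAt; rwa [hρ0] at this
  -- the -1 eigenspace (as fixed space of M on which rh is linearized)
  set Fm : Submodule ℝ E := LinearMap.ker ((M - ContinuousLinearMap.id ℝ E : E →L[ℝ] E) : E →ₗ[ℝ] E) with hFmdef
  have hFmem : ∀ z : E, z ∈ Fm ↔ M z = z := fun z => by
    simp [hFmdef, LinearMap.mem_ker, sub_eq_zero]
  obtain ⟨q, hq⟩ := Submodule.exists_isCompl Fm
  set π : E →L[ℝ] ↥Fm := LinearMap.toContinuousLinearMap (Fm.linearProjOfIsCompl q hq)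
    with hπdef
  have hπ : ∀ z : ↥Fm, π ↑z = z := fun z => by
    simp [hπdef, Submodule.linearProjOfIsCompl_apply_left hq z]
    exact Submodule.projectionOnto_apply_left hq z
  set g : ↥Fm → ↥Fm := fun w => π (ρ (sh (ρinv ↑w))) with hgdef
  have hzcoe : ((0 : ↥Fm) : E) = 0 := rfl
  -- strict derivative of g
  have hgS : HasStrictFDerivAt g ((twoSmulEquiv ↥Fm : ↥Fm ≃L[ℝ] ↥Fm) : ↥Fm →L[ℝ] ↥Fm)
      (0 : ↥Fm) := by
    have h1 : HasStrictFDerivAt (fun w : ↥Fm => (w : E)) Fm.subtypeL 0 :=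
      Fm.subtypeL.hasStrictFDerivAt
    have hρinvS' : HasStrictFDerivAt ρinv
        ((ContinuousLinearEquiv.refl ℝ E).symm : E →L[ℝ] E) ((0 : ↥Fm) : E) := hρinvS
    have h2 := hρinvS'.comp (0 : ↥Fm) h1
    have hsS' : HasStrictFDerivAt sh ((2:ℝ) • ContinuousLinearMap.id ℝ E)
        (ρinv ((0 : ↥Fm) : E)) := by rw [hzcoe, hρinv0]; exact hsS
    have h3 := hsS'.comp (0 : ↥Fm) h2
    have hρS' : HasStrictFDerivAt ρ
        ((ContinuousLinearEquiv.refl ℝ E : E ≃L[ℝ] E) : E →L[ℝ] E)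
        (sh (ρinv ((0 : ↥Fm) : E))) := by rw [hzcoe, hρinv0, hs0]; exact hρS
    have h4 := hρS'.comp (0 : ↥Fm) h3
    have hπS : HasStrictFDerivAt (⇑π) π (ρ (sh (ρinv ((0 : ↥Fm) : E)))) :=
      π.hasStrictFDerivAt
    have h5 := hπS.comp (0 : ↥Fm) h4
    convert h5 using 1
    · rfl
    · rfl
    ext w
    rw [show π ∘L ((ContinuousLinearEquiv.refl ℝ E : E →L[ℝ] E).comp
        (((2:ℝ) • ContinuousLinearMap.id ℝ E).comp
          (((ContinuousLinearEquiv.refl ℝ E).symm : E →L[ℝ] E).comp Fm.subtypeL))) = π ∘L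
            (((2:ℝ) • ContinuousLinearMap.id ℝ E).comp Fm.subtypeL) from by ext; simp]
    have hval : π ((2:ℝ) • (w : E)) = (2:ℝ) • w := by rw [map_smul, hπ]
    rw [show ((π.comp (((2:ℝ) • ContinuousLinearMap.id ℝ E).comp Fm.subtypeL)) w)
      = π ((2:ℝ) • (w : E)) from rfl, hval]
    rfl
  haveI : CompleteSpace ↥Fm := FiniteDimensional.complete ℝ ↥Fm
  set ginv : ↥Fm → ↥Fm := hgS.localInverse g _ 0 with hginvdef
  have hg0 : g 0 = 0 := by
    show π (ρ (sh (ρinv ((0 : ↥Fm) : E)))) = 0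
    rw [hzcoe, hρinv0, hs0, hρ0, map_zero]
  have hgright : ∀ᶠ z in 𝓝 (0 : ↥Fm), g (ginv z) = z := by
    have := hgS.eventually_right_inverse; rwa [hg0] at this
  have hginvcont : ContinuousAt ginv 0 := by
    have := hgS.localInverse_continuousAt; rwa [hg0] at this
  have hginv0 : ginv 0 = 0 := by
    have := hgS.localInverse_apply_image; rwa [hg0] at this
  -- continuity facts
  have hρcont : ContinuousAt ρ 0 := hρS.continuousAt
  have hrhcont : ContinuousAt rh 0 := hrC.continuousAt
  have hshcont : ContinuousAt sh 0 := hsS.continuousAt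
  have hπρ : Filter.Tendsto (fun v => π (ρ v)) (𝓝 (0:E)) (𝓝 (0 : ↥Fm)) := by
    have h : Filter.Tendsto (fun v => π (ρ v)) (𝓝 (0:E)) (𝓝 (π (ρ 0))) :=
      π.continuous.continuousAt.comp hρcont
    rw [hρ0, map_zero] at h; exact h
  have t1 : Filter.Tendsto (fun v => ginv (π (ρ v))) (𝓝 (0:E)) (𝓝 (0 : ↥Fm)) := by
    have := hginvcont.tendsto.comp hπρ; rwa [hginv0] at this
  have t2 : Filter.Tendsto (fun v => ((ginv (π (ρ v))) : E)) (𝓝 (0:E)) (𝓝 (0:E)) := by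
    have := (continuous_subtype_val.tendsto (0 : ↥Fm)).comp t1
    exact this
  set χ : E → E := fun v => ρinv ↑(ginv (π (ρ v))) with hχdef
  have hχ : Filter.Tendsto χ (𝓝 (0:E)) (𝓝 (0:E)) := by
    have := hρinvcont.tendsto.comp t2; rwa [hρinv0] at this
  have hrhχ : Filter.Tendsto (fun v => rh (χ v)) (𝓝 (0:E)) (𝓝 (0:E)) := by
    have := hrhcont.tendsto.comp hχ; rwa [hr0] at this
  have hshχ : Filter.Tendsto (fun v => sh (χ v)) (𝓝 (0:E)) (𝓝 (0:E)) := by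
    have := hshcont.tendsto.comp hχ; rwa [hs0] at this
  -- assemble
  filter_upwards [hrr, hρleft, hπρ.eventually hgright, hχ.eventually hrr,
    hχ.eventually hρleft, hrhχ.eventually hρleft, t2.eventually hρright,
    hχ.eventually hcomm, hshχ.eventually hrr, hshχ.eventually hρleft,
    hχ.eventually hU0] with v h1 h2 h3 h4 h5 h6 h7 h8 h9 h10 h11
  intro hrv
  have hρvF : ρ v ∈ Fm := by
    have e := econj v h1
    rw [hrv] at e
    exact (hFmem _).2 e.symm
  have hπρv : ((π (ρ v)) : E) = ρ v := by
    have := hπ ⟨ρ v, hρvF⟩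
    exact congrArg Subtype.val this
  set w : E := χ v with hwdef
  have hρw : ρ w = ↑(ginv (π (ρ v))) := h7
  have hginvF : M ↑(ginv (π (ρ v))) = ↑(ginv (π (ρ v))) := (hFmem _).1 (ginv (π (ρ v))).2
  have hrhw : rh w = w := by
    have e1 : ρ (rh w) = ρ w := by rw [econj w h4, hρw, hginvF, ← hρw]
    rw [← h6, e1, h5]
  have hFshw : ρ (sh w) ∈ Fm := by
    refine (hFmem _).2 ?_
    rw [← econj (sh w) h9, h8, hrhw]
  have hπshw : ((π (ρ (sh w))) : E) = ρ (sh w) := by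
    have := hπ ⟨ρ (sh w), hFshw⟩
    exact congrArg Subtype.val this
  have hkey : π (ρ (sh w)) = π (ρ v) := h3
  have hρeq : ρ (sh w) = ρ v := by rw [← hπshw, hkey, hπρv]
  have hshw : sh w = v := by rw [← h10, hρeq, h2]
  exact ⟨w, h11, hrhw, hshw⟩

open Manifold Set

lemma chart_rep {E : Type*} [NormedAddCommGroup E] [NormedSpace ℝ E]
    {G : Type*} [TopologicalSpace G] [ChartedSpace E G]
    {f : G → G} (hf : ContMDiff (modelWithCornersSelf ℝ E) (modelWithCornersSelf ℝ E) (⊤ : ℕ∞) f)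
    {a : G} (hfa : f a = a) :
    ContDiffAt ℝ ((⊤:ℕ∞) : WithTop ℕ∞) (fun v : E => chartAt E a (f ((chartAt E a).symm v)))
      (chartAt E a a) := by
  have h := hf.contMDiffAt (x := a)
  rw [contMDiffAt_iff] at h
  obtain ⟨-, h2⟩ := h
  rw [hfa] at h2
  simp only [extChartAt, OpenPartialHomeomorph.extend, modelWithCornersSelf_partialEquiv,
    PartialEquiv.trans_refl] at h2
  simp only [OpenPartialHomeomorph.coe_coe, OpenPartialHomeomorph.coe_coe_symm,
    modelWithCornersSelf_coe, range_id, contDiffWithinAt_univ] at h2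
  exact h2

lemma chart_rep_mul {E : Type*} [NormedAddCommGroup E] [NormedSpace ℝ E]
    {G : Type*} [TopologicalSpace G] [ChartedSpace E G] [Group G]
    [LieGroup (modelWithCornersSelf ℝ E) (⊤ : ℕ∞) G] :
    ContDiffAt ℝ ((⊤:ℕ∞) : WithTop ℕ∞)
      (fun p : E × E => chartAt E (1:G)
        ((chartAt E (1:G)).symm p.1 * (chartAt E (1:G)).symm p.2))
      (chartAt E (1:G) 1, chartAt E (1:G) 1) := by
  have h := (contMDiff_mul (modelWithCornersSelf ℝ E) (⊤ : ℕ∞) (G := G)).contMDiffAt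
    (x := ((1:G), (1:G)))
  rw [contMDiffAt_iff] at h
  obtain ⟨-, h2⟩ := h
  rw [one_mul] at h2
  rw [extChartAt_prod] at h2
  simp only [extChartAt, OpenPartialHomeomorph.extend,
    modelWithCornersSelf_partialEquiv, PartialEquiv.trans_refl,
    PartialEquiv.prod_coe_symm, PartialEquiv.prod_coe,
    OpenPartialHomeomorph.coe_coe, OpenPartialHomeomorph.coe_coe_symm,
    modelWithCornersSelf_coe, range_id, contDiffWithinAt_univ] at h2
  rw [ModelWithCorners.range_eq_univ, contDiffWithinAt_univ] at h2
  exact h2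


/-- Let `G` be a compact connected Lie group and `τ` a smooth involutive automorphism
with fixed-point subgroup `G_τ`. Define `G* = {x : τ x = x⁻¹}` and
`f(k G_τ) = k (τ k)⁻¹`. Then `f` is well defined and injective on cosets
(`f a = f b ↔ b⁻¹ a ∈ G_τ`), and its image `{k (τ k)⁻¹ : k ∈ G}`, viewed as a subset
of `G*`, is both open and closed in `G*`. -/
theorem stmt_14 {E : Type*} [NormedAddCommGroup E] [NormedSpace ℝ E]
    {G : Type*} [TopologicalSpace G] [ChartedSpace E G] [Group G]
    [LieGroup (modelWithCornersSelf ℝ E) (⊤ : ℕ∞) G]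
    [CompactSpace G] [ConnectedSpace G]
    (τ : G ≃* G) (hτ : ∀ g, τ (τ g) = g)
    (hsmooth : ContMDiff (modelWithCornersSelf ℝ E) (modelWithCornersSelf ℝ E) (⊤ : ℕ∞)
      (τ : G → G)) :
    (∀ a b : G, a * (τ a)⁻¹ = b * (τ b)⁻¹ ↔ τ (b⁻¹ * a) = b⁻¹ * a) ∧
    IsOpen {x : {x : G // τ x = x⁻¹} | ∃ k : G, (x : G) = k * (τ k)⁻¹} ∧
    IsClosed {x : {x : G // τ x = x⁻¹} | ∃ k : G, (x : G) = k * (τ k)⁻¹} := by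
  haveI : IsTopologicalGroup G := topologicalGroup_of_lieGroup (modelWithCornersSelf ℝ E) (⊤ : ℕ∞)
  -- part 1 : the algebraic equivalence
  have halg : ∀ a b : G, a * (τ a)⁻¹ = b * (τ b)⁻¹ ↔ τ (b⁻¹ * a) = b⁻¹ * a := by
    intro a b
    rw [map_mul, map_inv]
    constructor
    · intro h
      have h2 : b⁻¹ * (a * (τ a)⁻¹) * τ a = b⁻¹ * (b * (τ b)⁻¹) * τ a := by rw [h]
      calc (τ b)⁻¹ * τ a = b⁻¹ * (b * (τ b)⁻¹) * τ a := by group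
        _ = b⁻¹ * (a * (τ a)⁻¹) * τ a := h2.symm
        _ = b⁻¹ * a := by group
    · intro h
      have h2 : b * ((τ b)⁻¹ * τ a) * (τ a)⁻¹ = b * (b⁻¹ * a) * (τ a)⁻¹ := by rw [h]
      calc a * (τ a)⁻¹ = b * (b⁻¹ * a) * (τ a)⁻¹ := by group
        _ = b * ((τ b)⁻¹ * τ a) * (τ a)⁻¹ := h2.symm
        _ = b * (τ b)⁻¹ := by group
  -- G* membership of k (τ k)⁻¹
  have hmemstar : ∀ k : G, τ (k * (τ k)⁻¹) = (k * (τ k)⁻¹)⁻¹ := fun k => by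
    rw [map_mul, map_inv, hτ, mul_inv_rev, inv_inv]
  have hcontτ : Continuous (τ : G → G) := hsmooth.continuous
  -- Hausdorffness
  haveI : T2Space G := by
    have h1closed : IsClosed ({1} : Set G) := by
      rw [← isOpen_compl_iff]
      rw [isOpen_iff_forall_mem_open]
      intro x hx
      rw [Set.mem_compl_singleton_iff] at hx
      set φ := chartAt E (1:G) with hφ
      have h1s : (1:G) ∈ φ.source := mem_chart_source E 1
      have hW : IsOpen (φ.source ∩ φ ⁻¹' ({φ 1}ᶜ)) :=
        φ.isOpen_inter_preimage (isOpen_compl_singleton)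
      have hWne1 : (1:G) ∉ φ.source ∩ φ ⁻¹' ({φ 1}ᶜ) := by
        intro ⟨_, h2⟩; exact h2 rfl
      by_cases hxs : x ∈ φ.source
      · refine ⟨φ.source ∩ φ ⁻¹' ({φ 1}ᶜ), ?_, hW, ⟨hxs, ?_⟩⟩
        · intro y hy
          rw [Set.mem_compl_singleton_iff]
          rintro rfl; exact hWne1 hy
        · simp only [Set.mem_preimage, Set.mem_compl_singleton_iff]
          intro h; exact hx (φ.injOn hxs h1s h)
      · by_cases hxi : x⁻¹ ∈ φ.source
        · refine ⟨(fun y : G => y⁻¹) ⁻¹' (φ.source ∩ φ ⁻¹' ({φ 1}ᶜ)), ?_,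
            hW.preimage continuous_inv, ?_⟩
          · intro y hy
            rw [Set.mem_compl_singleton_iff]
            rintro rfl
            simp only [Set.mem_preimage, inv_one] at hy
            exact hWne1 hy
          · simp only [Set.mem_preimage]
            refine ⟨hxi, ?_⟩
            simp only [Set.mem_preimage, Set.mem_compl_singleton_iff]
            intro h
            have : x⁻¹ = 1 := φ.injOn hxi h1s h
            exact hx (by simpa [inv_eq_one] using this)
        · refine ⟨(fun y : G => x⁻¹ * y) ⁻¹' φ.source, ?_,
            φ.open_source.preimage (continuous_const.mul continuous_id), ?_⟩
          · intro y hy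
            rw [Set.mem_compl_singleton_iff]
            rintro rfl
            simp only [Set.mem_preimage, mul_one] at hy
            exact hxi hy
          · simp only [Set.mem_preimage, inv_mul_cancel]
            exact h1s
    haveI := IsTopologicalGroup.t1Space G h1closed
    infer_instance
  haveI : LocallyCompactSpace G := inferInstance
  haveI : FiniteDimensional ℝ E := by
    set φ := chartAt E (1:G) with hφ
    have h1s : (1:G) ∈ φ.source := mem_chart_source E 1
    obtain ⟨K, hKnhds, hKsub, hKcomp⟩ :=
      local_compact_nhds (φ.open_source.mem_nhds h1s)
    have hKE : IsCompact (φ '' K) := hKcomp.image_of_continuousOn (φ.continuousOn.mono hKsub)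
    have hmemE : φ '' K ∈ 𝓝 (φ 1) := by
      rw [← φ.map_nhds_eq h1s]
      exact Filter.image_mem_map hKnhds
    haveI : LocallyCompactSpace E :=
      hKE.locallyCompactSpace_of_mem_nhds_of_addGroup hmemE
    exact FiniteDimensional.of_locallyCompactSpace ℝ
  -- closedness
  have hclosed : IsClosed {x : {x : G // τ x = x⁻¹} | ∃ k : G, (x : G) = k * (τ k)⁻¹} := by
    have hcont : Continuous (fun k : G => (⟨k * (τ k)⁻¹, hmemstar k⟩ : {x : G // τ x = x⁻¹})) :=
      Continuous.subtype_mk (continuous_id.mul (hcontτ.inv)) _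
    have : {x : {x : G // τ x = x⁻¹} | ∃ k : G, (x : G) = k * (τ k)⁻¹} =
        Set.range (fun k : G => (⟨k * (τ k)⁻¹, hmemstar k⟩ : {x : G // τ x = x⁻¹})) := by
      ext x
      simp [Subtype.ext_iff, eq_comm]
    rw [this]
    exact (isCompact_range hcont).isClosed
  -- the local statement at 1
  have hlocal : ∃ U : Set G, IsOpen U ∧ (1:G) ∈ U ∧
      ∀ x ∈ U, τ x = x⁻¹ → ∃ k : G, x = k * (τ k)⁻¹ := by
    have hone : (1 : WithTop ℕ∞) ≤ ((⊤:ℕ∞) : WithTop ℕ∞) := by exact_mod_cast le_top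
    set σ : G → G := fun x => (τ x)⁻¹ with hσdef
    have hσsm : ContMDiff (modelWithCornersSelf ℝ E) (modelWithCornersSelf ℝ E) (⊤ : ℕ∞) σ :=
      hsmooth.inv
    have hσ1 : σ 1 = 1 := by simp [hσdef]
    have hσcont : Continuous σ := hσsm.continuous
    have hσσ : ∀ x, σ (σ x) = x := fun x => by simp [hσdef, map_inv, hτ]
    set φ := chartAt E (1:G) with hφdef
    have h1s : (1:G) ∈ φ.source := mem_chart_source E 1
    set c : E := φ 1 with hcdef
    set ψ : G → E := fun x => φ x - c with hψdef
    set ψi : E → G := fun v => φ.symm (v + c) with hψidef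
    have hψ1 : ψ 1 = 0 := sub_self c
    have hψi0 : ψi 0 = 1 := by
      show φ.symm (0 + c) = 1
      rw [zero_add, hcdef]
      exact φ.left_inv h1s
    have hψiψ : ∀ x ∈ φ.source, ψi (ψ x) = x := fun x hx => by
      show φ.symm (φ x - c + c) = x
      rw [sub_add_cancel]
      exact φ.left_inv hx
    have hct : c ∈ φ.target := φ.map_source h1s
    have htend_add : Filter.Tendsto (fun v : E => v + c) (𝓝 0) (𝓝 c) := by
      have h := ((continuous_id.add (continuous_const (y := c))).tendsto (0:E))
      simpa [Pi.add_def] using h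
    have hev_target : ∀ᶠ v in 𝓝 (0:E), v + c ∈ φ.target :=
      htend_add.eventually (φ.open_target.eventually_mem hct)
    have hψψi : ∀ᶠ v in 𝓝 (0:E), ψ (ψi v) = v := hev_target.mono fun v hv => by
      show φ (φ.symm (v + c)) - c = v
      rw [φ.right_inv hv]
      abel
    have hψicont : ContinuousAt ψi 0 := by
      have h2 : ContinuousAt (φ.symm) ((fun v : E => v + c) 0) := by
        rw [show (fun v : E => v + c) 0 = c by simp]
        exact φ.continuousAt_symm hct
      exact ContinuousAt.comp (f := fun v : E => v + c) h2
        ((continuous_id.add continuous_const).continuousAt)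
    have hψitend : Filter.Tendsto ψi (𝓝 0) (𝓝 1) := by
      have := hψicont.tendsto; rwa [hψi0] at this
    have hψcont : ContinuousAt ψ 1 := (φ.continuousAt h1s).sub continuousAt_const
    have hψtend : Filter.Tendsto ψ (𝓝 1) (𝓝 0) := by
      have := hψcont.tendsto; rwa [hψ1] at this
    set rh : E → E := fun v => ψ (σ (ψi v)) with hrhdef
    set mh : E × E → E := fun p => ψ (ψi p.1 * ψi p.2) with hmhdef
    set sh : E → E := fun v => mh (v, v) with hshdef
    have hrh0 : rh 0 = 0 := by
      show ψ (σ (ψi 0)) = 0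
      rw [hψi0, hσ1, hψ1]
    have hsh0 : sh 0 = 0 := by
      show ψ (ψi 0 * ψi 0) = 0
      rw [hψi0, one_mul, hψ1]
    -- smoothness of rh in the chart
    have hrhC : ContDiffAt ℝ ((⊤:ℕ∞) : WithTop ℕ∞) rh 0 := by
      have h := chart_rep hσsm hσ1
      have hadd : ContDiffAt ℝ ((⊤:ℕ∞) : WithTop ℕ∞) (fun v : E => v + c) 0 :=
        contDiffAt_id.add contDiffAt_const
      have h' : ContDiffAt ℝ ((⊤:ℕ∞) : WithTop ℕ∞)
          (fun v : E => chartAt E (1:G) (σ ((chartAt E (1:G)).symm v)))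
          ((fun v : E => v + c) 0) := by
        simpa using h
      have h2 := h'.comp 0 hadd
      exact h2.sub contDiffAt_const
    -- smoothness of mh
    have hmhC : ContDiffAt ℝ ((⊤:ℕ∞) : WithTop ℕ∞) mh (0, 0) := by
      have h := chart_rep_mul (E := E) (G := G)
      have hadd : ContDiffAt ℝ ((⊤:ℕ∞) : WithTop ℕ∞)
          (fun p : E × E => (p.1 + c, p.2 + c)) (0, 0) :=
        (contDiffAt_fst.add contDiffAt_const).prodMk (contDiffAt_snd.add contDiffAt_const)
      have h' : ContDiffAt ℝ ((⊤:ℕ∞) : WithTop ℕ∞)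
          (fun p : E × E => chartAt E (1:G)
            ((chartAt E (1:G)).symm p.1 * (chartAt E (1:G)).symm p.2))
          ((fun p : E × E => (p.1 + c, p.2 + c)) (0, 0)) := by
        simpa using h
      have h2 := h'.comp (0, 0) hadd
      exact h2.sub contDiffAt_const
    have hshC : ContDiffAt ℝ ((⊤:ℕ∞) : WithTop ℕ∞) sh 0 := by
      have hdg : ContDiffAt ℝ ((⊤:ℕ∞) : WithTop ℕ∞) (fun v : E => ((v, v) : E × E)) 0 :=
        contDiffAt_id.prodMk contDiffAt_id
      have hmhC' : ContDiffAt ℝ ((⊤:ℕ∞) : WithTop ℕ∞) mh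
          ((fun v : E => ((v, v) : E × E)) 0) := hmhC
      exact ContDiffAt.comp (f := fun v : E => ((v, v) : E × E)) 0 hmhC' hdg
    -- derivative of mh at the origin
    have hD : HasFDerivAt mh (fderiv ℝ mh (0,0)) (0,0) :=
      (hmhC.differentiableAt (by simp)).hasFDerivAt
    set D := fderiv ℝ mh (0,0) with hDdef
    have haxis1 : ∀ᶠ u in 𝓝 (0:E), mh (u, 0) = u := hψψi.mono fun u hu => by
      show ψ (ψi u * ψi 0) = u
      rw [hψi0, mul_one, hu]
    have haxis2 : ∀ᶠ u in 𝓝 (0:E), mh (0, u) = u := hψψi.mono fun u hu => by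
      show ψ (ψi 0 * ψi u) = u
      rw [hψi0, one_mul, hu]
    have hDinl : D.comp (ContinuousLinearMap.inl ℝ E E) = ContinuousLinearMap.id ℝ E := by
      have hD1 : HasFDerivAt mh D ((fun u : E => ((u, (0:E)) : E × E)) 0) := hD
      have hinl : HasFDerivAt (fun u : E => ((u, (0:E)) : E × E))
          (ContinuousLinearMap.inl ℝ E E) 0 := (ContinuousLinearMap.inl ℝ E E).hasFDerivAt
      have h1 : HasFDerivAt (fun u : E => mh (u, 0))
          (D.comp (ContinuousLinearMap.inl ℝ E E)) 0 :=
        HasFDerivAt.comp (f := fun u : E => ((u, (0:E)) : E × E)) 0 hD1 hinl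
      have h2 : HasFDerivAt (fun u : E => u)
          (D.comp (ContinuousLinearMap.inl ℝ E E)) 0 :=
        h1.congr_of_eventuallyEq (haxis1.mono fun u hu => hu.symm)
      exact h2.unique (hasFDerivAt_id 0)
    have hDinr : D.comp (ContinuousLinearMap.inr ℝ E E) = ContinuousLinearMap.id ℝ E := by
      have hD1 : HasFDerivAt mh D ((fun u : E => (((0:E), u) : E × E)) 0) := hD
      have hinr : HasFDerivAt (fun u : E => (((0:E), u) : E × E))
          (ContinuousLinearMap.inr ℝ E E) 0 := (ContinuousLinearMap.inr ℝ E E).hasFDerivAt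
      have h1 : HasFDerivAt (fun u : E => mh (0, u))
          (D.comp (ContinuousLinearMap.inr ℝ E E)) 0 :=
        HasFDerivAt.comp (f := fun u : E => (((0:E), u) : E × E)) 0 hD1 hinr
      have h2 : HasFDerivAt (fun u : E => u)
          (D.comp (ContinuousLinearMap.inr ℝ E E)) 0 :=
        h1.congr_of_eventuallyEq (haxis2.mono fun u hu => hu.symm)
      exact h2.unique (hasFDerivAt_id 0)
    have hDdiag : ∀ u : E, D (u, u) = u + u := by
      intro u
      have e1 : D (u, (0:E)) = u := by
        have := congrArg (fun L : E →L[ℝ] E => L u) hDinl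
        simpa using this
      have e2 : D ((0:E), u) = u := by
        have := congrArg (fun L : E →L[ℝ] E => L u) hDinr
        simpa using this
      have : ((u, u) : E × E) = (u, 0) + (0, u) := by simp
      rw [this, map_add, e1, e2]
    -- strict derivative of sh
    have hshS : HasStrictFDerivAt sh ((2:ℝ) • ContinuousLinearMap.id ℝ E) 0 := by
      have hdiagC : HasFDerivAt (fun v : E => ((v, v) : E × E))
          ((ContinuousLinearMap.id ℝ E).prod (ContinuousLinearMap.id ℝ E)) 0 :=
        ((ContinuousLinearMap.id ℝ E).prod (ContinuousLinearMap.id ℝ E)).hasFDerivAt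
      have hD1 : HasFDerivAt mh D ((fun v : E => ((v, v) : E × E)) 0) := hD
      have h1 : HasFDerivAt sh
          (D.comp ((ContinuousLinearMap.id ℝ E).prod (ContinuousLinearMap.id ℝ E))) 0 :=
        HasFDerivAt.comp (f := fun v : E => ((v, v) : E × E)) 0 hD1 hdiagC
      have heq : D.comp ((ContinuousLinearMap.id ℝ E).prod (ContinuousLinearMap.id ℝ E))
          = (2:ℝ) • ContinuousLinearMap.id ℝ E := by
        ext u
        simp [hDdiag u, two_smul]
      rw [heq] at h1
      exact hshC.hasStrictFDerivAt' h1 (by simp)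
    -- rh is an involution near 0
    have hσψitend : Filter.Tendsto (fun v => σ (ψi v)) (𝓝 (0:E)) (𝓝 (1:G)) := by
      have := (hσcont.tendsto (1:G)).comp hψitend
      rwa [hσ1] at this
    have hev_src : ∀ᶠ v in 𝓝 (0:E), σ (ψi v) ∈ φ.source :=
      hσψitend.eventually (φ.open_source.eventually_mem h1s)
    have hrr : ∀ᶠ v in 𝓝 (0:E), rh (rh v) = v := by
      filter_upwards [hψψi, hev_src] with v h1 h2
      show ψ (σ (ψi (ψ (σ (ψi v))))) = v
      rw [hψiψ _ h2, hσσ, h1]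
    -- rh and sh commute near 0
    have hyytend : Filter.Tendsto (fun v => ψi v * ψi v) (𝓝 (0:E)) (𝓝 (1:G)) := by
      have := hψitend.mul hψitend
      rwa [one_mul] at this
    have hev_yy : ∀ᶠ v in 𝓝 (0:E), ψi v * ψi v ∈ φ.source :=
      hyytend.eventually (φ.open_source.eventually_mem h1s)
    have hσmul : ∀ y : G, σ (y * y) = σ y * σ y := fun y => by
      simp [hσdef, map_mul, mul_inv_rev]
    have hcomm : ∀ᶠ v in 𝓝 (0:E), rh (sh v) = sh (rh v) := by
      filter_upwards [hev_yy, hev_src] with v h1 h2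
      show ψ (σ (ψi (ψ (ψi v * ψi v)))) = ψ (ψi (ψ (σ (ψi v))) * ψi (ψ (σ (ψi v))))
      rw [hψiψ _ h1, hψiψ _ h2, hσmul]
    -- apply the analytic core lemma
    set U0 : Set E := {w : E | σ (ψi w) ∈ φ.source ∧ ψi w * ψi w ∈ φ.source} with hU0def
    have hU0 : U0 ∈ 𝓝 (0:E) := hev_src.and hev_yy
    have hcore := core_analysis hrhC hrh0 hrr hcomm hsh0 hshS hU0
    -- transfer back to the group
    have hev_final : ∀ᶠ x in 𝓝 (1:G), (τ x = x⁻¹ → ∃ k : G, x = k * (τ k)⁻¹) := by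
      have hpull := hψtend.eventually hcore
      have hxsrc : ∀ᶠ x in 𝓝 (1:G), x ∈ φ.source := φ.open_source.eventually_mem h1s
      filter_upwards [hpull, hxsrc] with x hx hxs
      intro hstar
      have hσx : σ x = x := by
        show (τ x)⁻¹ = x
        rw [hstar, inv_inv]
      have hrv : rh (ψ x) = ψ x := by
        show ψ (σ (ψi (ψ x))) = ψ x
        rw [hψiψ x hxs, hσx]
      obtain ⟨w, hwU, hwr, hws⟩ := hx hrv
      have hyσ : σ (ψi w) = ψi w := by
        have h1 : ψ (σ (ψi w)) = w := hwr
        have := hψiψ _ hwU.1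
        rw [h1] at this
        exact this.symm
      have hyy : ψi w * ψi w = x := by
        have h1 : ψ (ψi w * ψi w) = ψ x := hws
        have := hψiψ _ hwU.2
        rw [h1, hψiψ x hxs] at this
        exact this.symm
      refine ⟨ψi w, ?_⟩
      have hτy : (τ (ψi w))⁻¹ = ψi w := hyσ
      rw [← hyy, hτy]
    rw [eventually_nhds_iff] at hev_final
    obtain ⟨U, hUsub, hUopen, hU1⟩ := hev_final
    exact ⟨U, hUopen, hU1, hUsub⟩
  -- openness
  have hopen : IsOpen {x : {x : G // τ x = x⁻¹} | ∃ k : G, (x : G) = k * (τ k)⁻¹} := by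
    obtain ⟨U, hUopen, hU1, hUP⟩ := hlocal
    set O : Set G := ⋃ k : G, (fun z => k * z * (τ k)⁻¹) '' U with hOdef
    have hOopen : IsOpen O := by
      refine isOpen_iUnion fun k => ?_
      have : (fun z => k * z * (τ k)⁻¹) '' U = (· * (τ k)⁻¹) '' ((k * ·) '' U) := by
        rw [Set.image_image]
      rw [this]
      exact (isOpenMap_mul_right _) _ ((isOpenMap_mul_left k) _ hUopen)
    have hset : {x : {x : G // τ x = x⁻¹} | ∃ k : G, (x : G) = k * (τ k)⁻¹} =
        Subtype.val ⁻¹' O := by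
      ext x
      constructor
      · rintro ⟨k, hk⟩
        simp only [Set.mem_preimage, hOdef, Set.mem_iUnion, Set.mem_image]
        exact ⟨k, 1, hU1, by rw [mul_one, ← hk]⟩
      · intro hx
        simp only [Set.mem_preimage, hOdef, Set.mem_iUnion, Set.mem_image] at hx
        obtain ⟨k, z, hzU, hk⟩ := hx
        have hzstar : τ z = z⁻¹ := by
          have hz : z = k⁻¹ * ↑x * τ k := by
            rw [← hk]; group
          rw [hz, map_mul, map_mul, map_inv, hτ, x.2]
          group
        obtain ⟨m, hm⟩ := hUP z hzU hzstar
        refine ⟨k * m, ?_⟩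
        rw [← hk, hm, map_mul, mul_inv_rev]
        group
    rw [hset]
    exact hOopen.preimage continuous_subtype_val
  exact ⟨halg, hopen, hclosed⟩
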